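/- Let B be a prime Banach algebra over ℝ, let D be a dense subset of B, and let f : B → B be a continuous automorphism. Suppose there exist fixed positive integers p ≥ 1 and q ≥ 1 such that f(xᵖ∘yᵠ) + [xᵖ, yᵠ] ∈ Z(B) for all x, y ∈ D. Then B is commutative. -/

import Mathlib

open Finset

/-- If a polynomial function (with vector coefficients) vanishes identically,
its degree-one coefficient is zero. -/
private lemma coeff_one_zero {M : Type*} [NormedAddCommGroup M] [NormedSpace ℝ M]
    {n : ℕ} (hn : 1 ≤ n) (a : ℕ → M)
    (h : ∀ t : ℝ, ∑ k ∈ range (n + 1), t ^ k • a k = 0) : a 1 = 0 := by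
  have hd : HasDerivAt (fun t : ℝ => ∑ k ∈ range (n + 1), t ^ k • a k)
      (∑ k ∈ range (n + 1), ((k : ℝ) * (0 : ℝ) ^ (k - 1)) • a k) 0 :=
    HasDerivAt.fun_sum fun k _ => (hasDerivAt_pow k (0 : ℝ)).smul_const (a k)
  have h0 : (fun t : ℝ => ∑ k ∈ range (n + 1), t ^ k • a k) = fun _ => (0 : M) :=
    funext h
  rw [h0] at hd
  have hz : (∑ k ∈ range (n + 1), ((k : ℝ) * (0 : ℝ) ^ (k - 1)) • a k) = 0 :=
    hd.unique (hasDerivAt_const 0 0)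
  have hs : (∑ k ∈ range (n + 1), ((k : ℝ) * (0 : ℝ) ^ (k - 1)) • a k) = a 1 := by
    rw [Finset.sum_eq_single 1]
    · norm_num
    · intro k hk hk1
      rcases Nat.eq_zero_or_pos k with h0' | h0'
      · subst h0'; simp
      · have h2 : (0 : ℝ) ^ (k - 1) = 0 := zero_pow (by omega)
        simp [h2]
    · intro hmem; exact absurd (mem_range.mpr (by omega)) hmem
  rw [hs] at hz
  exact hz

/-- If a real-linear map on a real normed algebra kills all `q`-th powers (`q ≥ 1`),
it is zero. -/
private lemma power_kill {B : Type*} [NormedRing B] [NormedAlgebra ℝ B]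
    (φ : B →ₗ[ℝ] B) {q : ℕ} (hq : 0 < q) (h : ∀ x : B, φ (x ^ q) = 0) :
    ∀ x : B, φ x = 0 := by
  intro x
  have hcast : ∀ k : ℕ, x ^ k * (q.choose k : B) = (q.choose k : ℝ) • x ^ k := by
    intro k
    rw [← (Nat.cast_commute (q.choose k) (x ^ k)).eq, ← nsmul_eq_mul,
      Nat.cast_smul_eq_nsmul ℝ]
  have expand : ∀ t : ℝ, (1 + t • x) ^ q
      = ∑ k ∈ range (q + 1), t ^ k • ((q.choose k : ℝ) • x ^ k) := by
    intro t
    rw [add_comm, (Commute.one_right (t • x)).add_pow q]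
    refine Finset.sum_congr rfl fun k hk => ?_
    rw [one_pow, mul_one, smul_pow, smul_mul_assoc, hcast k]
  have key : ∀ t : ℝ, ∑ k ∈ range (q + 1), t ^ k • φ ((q.choose k : ℝ) • x ^ k) = 0 := by
    intro t
    have h1 := h (1 + t • x)
    rw [expand t, map_sum] at h1
    simpa [map_smul] using h1
  have h1 : φ ((q.choose 1 : ℝ) • x ^ 1) = 0 :=
    coeff_one_zero hq (fun k => φ ((q.choose k : ℝ) • x ^ k)) (by simpa using key)
  rw [Nat.choose_one_right, pow_one, map_smul] at h1
  have hq' : (q : ℝ) ≠ 0 := Nat.cast_ne_zero.mpr hq.ne'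
  calc φ x = (q : ℝ)⁻¹ • ((q : ℝ) • φ x) := by
        rw [smul_smul, inv_mul_cancel₀ hq', one_smul]
    _ = 0 := by rw [h1, smul_zero]

/-- Corollary: a prime real Banach algebra with a continuous automorphism `f` satisfying
`f(x^p ∘ y^q) + [x^p, y^q] ∈ Z(B)` for fixed `p, q ≥ 1` and all `x, y` in a dense set `D`
is commutative. -/
theorem prime_banach_comm_of_auto_dense
    {B : Type*} [NormedRing B] [NormedAlgebra ℝ B] [CompleteSpace B]
    (hprime : ∀ x y : B, (∀ z : B, x * z * y = 0) → x = 0 ∨ y = 0)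
    (D : Set B) (hD : Dense D)
    (f : B → B) (hfcont : Continuous f) (hfbij : Function.Bijective f)
    (hfadd : ∀ x y : B, f (x + y) = f x + f y)
    (hfmul : ∀ x y : B, f (x * y) = f x * f y)
    (p q : ℕ) (hp : 0 < p) (hq : 0 < q)
    (hmain : ∀ x ∈ D, ∀ y ∈ D,
      ∀ b : B, (f (x ^ p * y ^ q + y ^ q * x ^ p) + (x ^ p * y ^ q - y ^ q * x ^ p)) * b
        = b * (f (x ^ p * y ^ q + y ^ q * x ^ p) + (x ^ p * y ^ q - y ^ q * x ^ p))) :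
    ∀ x y : B, x * y = y * x := by
  classical
  -- `f` as a real-linear map
  set F : B →+ B := AddMonoidHom.mk' f hfadd with hF
  have hFcoe : ⇑F = f := rfl
  set fl : B →ₗ[ℝ] B := (F.toRealLinearMap hfcont : B →L[ℝ] B).toLinearMap with hfl
  have hflcoe : ∀ w : B, fl w = f w := fun w => rfl
  -- Step 1: extend the hypothesis from the dense set to all of B
  have hall : ∀ x y b : B,
      (f (x ^ p * y ^ q + y ^ q * x ^ p) + (x ^ p * y ^ q - y ^ q * x ^ p)) * b
        = b * (f (x ^ p * y ^ q + y ^ q * x ^ p) + (x ^ p * y ^ q - y ^ q * x ^ p)) := by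
    intro x y b
    set g : B × B → B := fun v =>
      (f (v.1 ^ p * v.2 ^ q + v.2 ^ q * v.1 ^ p) + (v.1 ^ p * v.2 ^ q - v.2 ^ q * v.1 ^ p)) * b
        - b * (f (v.1 ^ p * v.2 ^ q + v.2 ^ q * v.1 ^ p)
            + (v.1 ^ p * v.2 ^ q - v.2 ^ q * v.1 ^ p)) with hg
    have hcont : Continuous g := by
      have c1 : Continuous fun v : B × B => v.1 ^ p * v.2 ^ q + v.2 ^ q * v.1 ^ p :=
        ((continuous_fst.pow p).mul (continuous_snd.pow q)).add
          ((continuous_snd.pow q).mul (continuous_fst.pow p))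
      have c2 : Continuous fun v : B × B => v.1 ^ p * v.2 ^ q - v.2 ^ q * v.1 ^ p :=
        ((continuous_fst.pow p).mul (continuous_snd.pow q)).sub
          ((continuous_snd.pow q).mul (continuous_fst.pow p))
      exact (((hfcont.comp c1).add c2).mul continuous_const).sub
        (continuous_const.mul ((hfcont.comp c1).add c2))
    have hclosed : IsClosed {v : B × B | g v = 0} := isClosed_eq hcont continuous_const
    have hsub : D ×ˢ D ⊆ {v : B × B | g v = 0} := by
      intro v hv
      have := hmain v.1 hv.1 v.2 hv.2 b
      simp only [Set.mem_setOf_eq, hg, sub_eq_zero]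
      exact this
    have hmem : (x, y) ∈ {v : B × B | g v = 0} :=
      hclosed.closure_subset_iff.mpr hsub ((hD.prod hD) (x, y))
    have : g (x, y) = 0 := hmem
    rw [hg] at this
    exact sub_eq_zero.mp this
  -- Step 2: linearize in y (kill the exponent q)
  have h1 : ∀ x y b : B,
      (f (x ^ p * y + y * x ^ p) + (x ^ p * y - y * x ^ p)) * b
        = b * (f (x ^ p * y + y * x ^ p) + (x ^ p * y - y * x ^ p)) := by
    intro x y b
    set u := x ^ p with hu
    set φ : B →ₗ[ℝ] B := (LinearMap.mulRight ℝ b - LinearMap.mulLeft ℝ b).comp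
        ((fl.comp (LinearMap.mulLeft ℝ u + LinearMap.mulRight ℝ u))
          + (LinearMap.mulLeft ℝ u - LinearMap.mulRight ℝ u)) with hφ
    have hφapp : ∀ w : B, φ w
        = (f (u * w + w * u) + (u * w - w * u)) * b - b * (f (u * w + w * u) + (u * w - w * u)) := by
      intro w
      simp only [hφ, LinearMap.comp_apply, LinearMap.sub_apply, LinearMap.add_apply,
        LinearMap.mulLeft_apply, LinearMap.mulRight_apply, hflcoe]
    have hpow : ∀ y' : B, φ (y' ^ q) = 0 := by
      intro y'
      rw [hφapp, sub_eq_zero]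
      exact hall x y' b
    have := power_kill φ hq hpow y
    rw [hφapp, sub_eq_zero] at this
    exact this
  -- Step 3: linearize in x (kill the exponent p)
  have h2 : ∀ x y b : B,
      (f (x * y + y * x) + (x * y - y * x)) * b
        = b * (f (x * y + y * x) + (x * y - y * x)) := by
    intro x y b
    set φ : B →ₗ[ℝ] B := (LinearMap.mulRight ℝ b - LinearMap.mulLeft ℝ b).comp
        ((fl.comp (LinearMap.mulRight ℝ y + LinearMap.mulLeft ℝ y))
          + (LinearMap.mulRight ℝ y - LinearMap.mulLeft ℝ y)) with hφ
    have hφapp : ∀ w : B, φ w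
        = (f (w * y + y * w) + (w * y - y * w)) * b - b * (f (w * y + y * w) + (w * y - y * w)) := by
      intro w
      simp only [hφ, LinearMap.comp_apply, LinearMap.sub_apply, LinearMap.add_apply,
        LinearMap.mulLeft_apply, LinearMap.mulRight_apply, hflcoe]
    have hpow : ∀ x' : B, φ (x' ^ p) = 0 := by
      intro x'
      rw [hφapp, sub_eq_zero]
      exact h1 x' y b
    have := power_kill φ hp hpow x
    rw [hφapp, sub_eq_zero] at this
    exact this
  -- Step 4: swap and subtract to get that all commutators are central
  have hcent : ∀ x y b : B, (x * y - y * x) * b = b * (x * y - y * x) := by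
    intro x y b
    have e1 := h2 x y b
    have e2 := h2 y x b
    rw [show y * x + x * y = x * y + y * x by exact add_comm _ _] at e2
    have e3 : ((2 : ℝ) • (x * y - y * x)) * b = b * ((2 : ℝ) • (x * y - y * x)) := by
      have := congrArg₂ (fun s t : B => s - t) e1 e2
      simp only [← sub_mul, ← mul_sub] at this
      have harg : (f (x * y + y * x) + (x * y - y * x))
          - (f (x * y + y * x) + (y * x - x * y)) = (2 : ℝ) • (x * y - y * x) := by
        rw [two_smul]; abel
      rw [harg] at this
      exact this
    rw [smul_mul_assoc, mul_smul_comm] at e3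
    have e4 : (2 : ℝ) • ((x * y - y * x) * b - b * (x * y - y * x)) = 0 := by
      rw [smul_sub, e3, sub_self]
    have e5 : (x * y - y * x) * b - b * (x * y - y * x) = 0 := by
      have h2' : (2 : ℝ) ≠ 0 := two_ne_zero
      calc (x * y - y * x) * b - b * (x * y - y * x)
          = (2 : ℝ)⁻¹ • ((2 : ℝ) • ((x * y - y * x) * b - b * (x * y - y * x))) := by
            rw [smul_smul, inv_mul_cancel₀ h2', one_smul]
        _ = 0 := by rw [e4, smul_zero]
    exact sub_eq_zero.mp e5
  -- Step 5: prime ring with all commutators central is commutative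
  intro x y
  set c := x * y - y * x with hc
  have hcb : ∀ b : B, c * b = b * c := hcent x y
  -- x * c is also a commutator, hence central
  have hxc : ∀ b : B, (x * c) * b = b * (x * c) := by
    intro b
    have : x * (x * y) - (x * y) * x = x * c := by rw [hc]; noncomm_ring
    have h := hcent x (x * y) b
    rw [this] at h
    exact h
  -- hence [x, z] * c = 0 for all z
  have hkill : ∀ z : B, (x * z - z * x) * c = 0 := by
    intro z
    have h := hxc z
    have : x * (c * z) = x * (z * c) := by rw [hcb z]
    calc (x * z - z * x) * c = (x * c) * z - z * (x * c) := by
          rw [sub_mul, mul_assoc x z c, ← hcb z, ← mul_assoc, ← mul_assoc]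
      _ = 0 := by rw [h, sub_self]
  have hcc : c * c = 0 := by
    have := hkill y
    rw [← hc] at this
    exact this
  have hzero : ∀ z : B, c * z * c = 0 := by
    intro z
    rw [mul_assoc, ← hcb z, ← mul_assoc, hcc, zero_mul]
  rcases hprime c c hzero with h | h <;>
    · rw [hc, sub_eq_zero] at h
      exact h
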